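/- Let f be convex, continuously differentiable on a real Hilbert space, with β-Lipschitz gradient (β > 0). Then for all x, y, ⟨∇f(x) − ∇f(y), x − y⟩ ≥ (1/β)‖∇f(x) − ∇f(y)‖² (Baillon–Haddad / cocoercivity). -/

import Mathlib

open scoped RealInnerProductSpace

lemma myLineDeriv {H : Type*} [NormedAddCommGroup H] [InnerProductSpace ℝ H]
    [CompleteSpace H] (f : H → ℝ) (g : H → H)
    (hgrad : ∀ x, HasGradientAt f (g x) x) (x d : H) (t : ℝ) :
    HasDerivAt (fun t : ℝ => f (x + t • d)) ⟪g (x + t • d), d⟫ t := by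
  have hγ : HasDerivAt (fun t : ℝ => x + t • d) d t := by
    simpa using ((hasDerivAt_id t).smul_const d).const_add x
  have := (hgrad (x + t • d)).hasFDerivAt.comp_hasDerivAt t hγ
  simpa [InnerProductSpace.toDual_apply_apply, Function.comp_def] using this

-- first order characterization of convexity
lemma myConvexLower {H : Type*} [NormedAddCommGroup H] [InnerProductSpace ℝ H]
    [CompleteSpace H] (f : H → ℝ) (g : H → H)
    (hconv : ConvexOn ℝ Set.univ f)
    (hgrad : ∀ x, HasGradientAt f (g x) x) (x y : H) :
    f x + ⟪g x, y - x⟫ ≤ f y := by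
  set d := y - x with hd
  have hder : HasDerivAt (fun t : ℝ => f (x + t • d)) ⟪g x, d⟫ 0 := by
    simpa using myLineDeriv f g hgrad x d 0
  have htend : Filter.Tendsto (slope (fun t : ℝ => f (x + t • d)) 0)
      (nhdsWithin 0 (Set.Ioi 0)) (nhds ⟪g x, d⟫) :=
    ((hasDerivAt_iff_tendsto_slope.mp hder).mono_left
      (nhdsWithin_mono _ (by intro t ht; exact Set.mem_compl_singleton_iff.mpr (ne_of_gt ht))))
  have hbound : ∀ᶠ t in nhdsWithin (0:ℝ) (Set.Ioi 0),
      slope (fun t : ℝ => f (x + t • d)) 0 t ≤ f y - f x := by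
    filter_upwards [Ioc_mem_nhdsGT_of_mem (Set.mem_Ico.mpr ⟨le_refl (0:ℝ), one_pos⟩)]
      with t ht
    obtain ⟨ht0, ht1⟩ := ht
    have hcv := hconv.2 (Set.mem_univ x) (Set.mem_univ y)
      (by linarith : (0:ℝ) ≤ 1 - t) ht0.le (by ring)
    have hxy : (1 - t) • x + t • y = x + t • d := by
      rw [hd]; module
    rw [hxy] at hcv
    simp only [smul_eq_mul] at hcv
    have key : f (x + t • d) - f (x + (0:ℝ) • d) ≤ t * (f y - f x) := by
      simp only [zero_smul, add_zero]
      nlinarith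
    rw [slope_def_field, sub_zero, div_le_iff₀ ht0]
    simp only [zero_smul, add_zero] at key ⊢
    nlinarith
  have := le_of_tendsto htend hbound
  linarith

-- descent lemma
lemma myDescent {H : Type*} [NormedAddCommGroup H] [InnerProductSpace ℝ H]
    [CompleteSpace H] (f : H → ℝ) (g : H → H) (β : ℝ) (hβ : 0 < β)
    (hgrad : ∀ x, HasGradientAt f (g x) x)
    (hlip : ∀ x y, ‖g x - g y‖ ≤ β * ‖x - y‖) (x y : H) :
    f y ≤ f x + ⟪g x, y - x⟫ + β / 2 * ‖y - x‖ ^ 2 := by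
  set d := y - x with hd
  have hgc : Continuous g := by
    refine (LipschitzWith.of_dist_le_mul (K := β.toNNReal) (f := g) ?_).continuous
    intro a b
    simpa [dist_eq_norm, Real.coe_toNNReal _ hβ.le] using hlip a b
  have hφ'c : Continuous (fun t : ℝ => ⟪g (x + t • d), d⟫) := by
    apply Continuous.inner
    · exact hgc.comp (by continuity)
    · exact continuous_const
  have hftc : f (x + (1:ℝ) • d) - f (x + (0:ℝ) • d)
      = ∫ t in (0:ℝ)..1, ⟪g (x + t • d), d⟫ := by
    refine (intervalIntegral.integral_eq_sub_of_hasDerivAt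
      (fun t _ => myLineDeriv f g hgrad x d t) (hφ'c.intervalIntegrable 0 1)).symm
  have hmono : ∫ t in (0:ℝ)..1, ⟪g (x + t • d), d⟫
      ≤ ∫ t in (0:ℝ)..1, (⟪g x, d⟫ + β * ‖d‖ ^ 2 * t) := by
    apply intervalIntegral.integral_mono_on one_pos.le
      (hφ'c.intervalIntegrable 0 1)
      (show IntervalIntegrable (fun t : ℝ => ⟪g x, d⟫ + β * ‖d‖ ^ 2 * t) MeasureTheory.volume 0 1 from
        ((continuous_const.add (continuous_const.mul continuous_id')).intervalIntegrable 0 1))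
    intro t ht
    have h1 : ⟪g (x + t • d) - g x, d⟫ ≤ ‖g (x + t • d) - g x‖ * ‖d‖ :=
      real_inner_le_norm _ _
    have h2 : ‖g (x + t • d) - g x‖ ≤ β * (t * ‖d‖) := by
      have := hlip (x + t • d) x
      simpa [norm_smul, abs_of_nonneg ht.1] using this
    have h3 : ⟪g (x + t • d), d⟫ = ⟪g x, d⟫ + ⟪g (x + t • d) - g x, d⟫ := by
      rw [inner_sub_left]; ring
    have hdn : (0:ℝ) ≤ ‖d‖ := norm_nonneg _
    nlinarith [mul_le_mul_of_nonneg_right h2 hdn]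
  have hcalc : ∫ t in (0:ℝ)..1, (⟪g x, d⟫ + β * ‖d‖ ^ 2 * t)
      = ⟪g x, d⟫ + β / 2 * ‖d‖ ^ 2 := by
    rw [intervalIntegral.integral_add (intervalIntegrable_const)
      (show IntervalIntegrable (fun t : ℝ => β * ‖d‖ ^ 2 * t) MeasureTheory.volume 0 1 from
        (continuous_const.mul continuous_id').intervalIntegrable 0 1),
      intervalIntegral.integral_const, intervalIntegral.integral_const_mul]
    simp [integral_id]
    ring
  simp only [one_smul, zero_smul, add_zero] at hftc
  have : x + d = y := by rw [hd]; abel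
  rw [this] at hftc
  linarith [hmono.trans_eq hcalc, hftc]

-- key lemma
lemma myKey {H : Type*} [NormedAddCommGroup H] [InnerProductSpace ℝ H]
    [CompleteSpace H] (f : H → ℝ) (g : H → H) (β : ℝ) (hβ : 0 < β)
    (hconv : ConvexOn ℝ Set.univ f)
    (hgrad : ∀ x, HasGradientAt f (g x) x)
    (hlip : ∀ x y, ‖g x - g y‖ ≤ β * ‖x - y‖) (x y : H) :
    f x + ⟪g x, y - x⟫ + 1 / (2 * β) * ‖g y - g x‖ ^ 2 ≤ f y := by
  set h : H → ℝ := fun z => f z - ⟪g x, z⟫ with hh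
  set gh : H → H := fun z => g z - g x with hgh
  have hhgrad : ∀ z, HasGradientAt h (gh z) z := by
    intro z
    have h1 : HasFDerivAt (fun z : H => ⟪g x, z⟫)
        (InnerProductSpace.toDual ℝ H (g x) : H →L[ℝ] ℝ) z :=
      (InnerProductSpace.toDual ℝ H (g x)).hasFDerivAt
    have := (hgrad z).hasFDerivAt.sub h1
    have h2 : HasFDerivAt h ((InnerProductSpace.toDual ℝ H (g z)) -
        (InnerProductSpace.toDual ℝ H (g x))) z := this
    rw [← map_sub] at h2
    exact h2
  have hhconv : ConvexOn ℝ Set.univ h := by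
    refine ⟨convex_univ, fun a _ b _ s t hs ht hst => ?_⟩
    have := hconv.2 (Set.mem_univ a) (Set.mem_univ b) hs ht hst
    simp only [hh, smul_eq_mul] at this ⊢
    rw [inner_add_right, real_inner_smul_right, real_inner_smul_right]
    linarith
  have hhlip : ∀ z w, ‖gh z - gh w‖ ≤ β * ‖z - w‖ := by
    intro z w
    simpa [hgh, sub_sub_sub_cancel_right] using hlip z w
  -- h is minimized at x
  have hmin : ∀ z, h x ≤ h z := by
    intro z
    have := myConvexLower h gh hhconv hhgrad x z
    simpa [hgh] using this
  -- descent step from y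
  set y' := y - (1 / β) • gh y with hy'
  have hdesc := myDescent h gh β hβ hhgrad hhlip y y'
  have hdiff : y' - y = -((1 / β) • gh y) := by rw [hy']; abel
  have e1 : ⟪gh y, y' - y⟫ = -(1 / β) * ‖gh y‖ ^ 2 := by
    rw [hdiff, inner_neg_right, real_inner_smul_right, real_inner_self_eq_norm_sq]
    ring
  have e2 : ‖y' - y‖ ^ 2 = (1 / β) ^ 2 * ‖gh y‖ ^ 2 := by
    rw [hdiff, norm_neg, norm_smul, Real.norm_eq_abs,
      abs_of_pos (by positivity : (0:ℝ) < 1 / β), mul_pow]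
  rw [e1, e2] at hdesc
  have hfin : h x ≤ h y - 1 / (2 * β) * ‖gh y‖ ^ 2 := by
    have hmy := hmin y'
    have e : h y + -(1 / β) * ‖gh y‖ ^ 2 + β / 2 * ((1 / β) ^ 2 * ‖gh y‖ ^ 2)
        = h y - 1 / (2 * β) * ‖gh y‖ ^ 2 := by
      field_simp; ring
    exact hmy.trans (hdesc.trans (le_of_eq e))
  simp only [hh, hgh] at hfin
  have : ⟪g x, y - x⟫ = ⟪g x, y⟫ - ⟪g x, x⟫ := by rw [inner_sub_right]
  linarith

theorem stmt_11 {H : Type*} [NormedAddCommGroup H] [InnerProductSpace ℝ H]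
    [CompleteSpace H] (f : H → ℝ) (g : H → H) (β : ℝ) (hβ : 0 < β)
    (hconv : ConvexOn ℝ Set.univ f)
    (hgrad : ∀ x, HasGradientAt f (g x) x)
    (hlip : ∀ x y, ‖g x - g y‖ ≤ β * ‖x - y‖) :
    ∀ x y, ⟪g x - g y, x - y⟫ ≥ (1 / β) * ‖g x - g y‖ ^ 2 := by
  intro x y
  have h1 := myKey f g β hβ hconv hgrad hlip x y
  have h2 := myKey f g β hβ hconv hgrad hlip y x
  have e1 : ⟪g x - g y, x - y⟫ = ⟪g x, x - y⟫ - ⟪g y, x - y⟫ := by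
    rw [inner_sub_left]
  have e2 : ⟪g x, y - x⟫ = -⟪g x, x - y⟫ := by
    rw [← inner_neg_right]; congr 1; abel
  have e3 : ‖g y - g x‖ = ‖g x - g y‖ := norm_sub_rev _ _
  rw [e2, e3] at h1
  have hβ' : β ≠ 0 := hβ.ne'
  have hb : 1 / (2 * β) * ‖g x - g y‖ ^ 2 + 1 / (2 * β) * ‖g x - g y‖ ^ 2
      = 1 / β * ‖g x - g y‖ ^ 2 := by field_simp; ring
  rw [e1]
  linarith
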